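/- Let P(ū, ȳ) = 2^{−N} ∏_{i=0}^{N−1} P(u_i | u₀^{i−1}, ȳ) and let Q(ū, ȳ) = 2^{−N} ∏_{i=0}^{N−1} Q(u_i | u₀^{i−1}, ȳ), where Q(u_i | u₀^{i−1}, ȳ) = 1/2 for i ∈ F and Q(u_i | u₀^{i−1}, ȳ) = P(u_i | u₀^{i−1}, ȳ) for i ∉ F. Then the total variation distance satisfies Σ_{ū,ȳ} |Q(ū,ȳ) − P(ū,ȳ)| ≤ 2 Σ_{i∈F} Σ_{ȳ} 2^{−N} Σ_{u₀^{i−1}} (∏_{j=0}^{i−1} P(u_j | u₀^{j−1}, ȳ)) · |1/2 − P(0 | u₀^{i−1}, ȳ)|. -/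

import Mathlib

open Finset

noncomputable section

/-- The polarization kernel `G₂ = [[1,0],[1,1]]` over GF(2). -/
def G2 : Matrix (Fin 2) (Fin 2) (ZMod 2) := !![1, 0; 1, 1]

/-- Index identification `Fin 2 × Fin (2^n) ≃ Fin (2^(n+1))`. -/
def finPowEquiv (n : ℕ) : Fin 2 × Fin (2 ^ n) ≃ Fin (2 ^ (n + 1)) :=
  finProdFinEquiv.trans (finCongr (by rw [pow_succ]; ring))

/-- The `n`-fold Kronecker power `G₂^{⊗n}` over GF(2). -/
def kronPow : (n : ℕ) → Matrix (Fin (2 ^ n)) (Fin (2 ^ n)) (ZMod 2)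
  | 0 => 1
  | n + 1 => Matrix.reindex (finPowEquiv n) (finPowEquiv n)
      (Matrix.kroneckerMap (· * ·) G2 (kronPow n))

/-- Reversal of the `n`-bit binary expansion of `i`. -/
def bitRevNat (n i : ℕ) : ℕ :=
  ∑ k ∈ Finset.range n, if Nat.testBit i (n - 1 - k) then 2 ^ k else 0

lemma sum_range_two_pow_lt (n : ℕ) : ∑ k ∈ Finset.range n, 2 ^ k < 2 ^ n := by
  induction n with
  | zero => simp
  | succ m ih => rw [Finset.sum_range_succ, pow_succ]; omega

lemma bitRevNat_lt (n i : ℕ) : bitRevNat n i < 2 ^ n := by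
  have h1 : bitRevNat n i ≤ ∑ k ∈ Finset.range n, 2 ^ k :=
    Finset.sum_le_sum (fun k _ => by split <;> simp)
  have h2 := sum_range_two_pow_lt n
  omega

/-- The bit-reversal permutation matrix `Aₙ`. -/
def bitRevMatrix (n : ℕ) : Matrix (Fin (2 ^ n)) (Fin (2 ^ n)) (ZMod 2) :=
  fun i j => if (j : ℕ) = bitRevNat n (i : ℕ) then 1 else 0

/-- The polar transform matrix `Hₙ = Aₙ G₂^{⊗n}`. -/
def polarH (n : ℕ) : Matrix (Fin (2 ^ n)) (Fin (2 ^ n)) (ZMod 2) :=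
  bitRevMatrix n * kronPow n

/-- BSC(D) transition probability `W(y∣x)`. -/
def bsc (D : ℝ) (y x : ZMod 2) : ℝ := if y = x then 1 - D else D

/-- The polar transform `x̄ = ū Hₙ` of a word `ū`. -/
def polarEnc (n : ℕ) (u : Fin (2 ^ n) → ZMod 2) : Fin (2 ^ n) → ZMod 2 :=
  Matrix.vecMul u (polarH n)

/-- `W^{(i)}(ȳ, u₀^{i−1} ∣ u_i)`; it depends on `u` only through coordinates `≤ i`,
the coordinates `> i` being summed out. -/
def Wi (D : ℝ) (n : ℕ) (y : Fin (2 ^ n) → ZMod 2) (i : Fin (2 ^ n))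
    (u : Fin (2 ^ n) → ZMod 2) : ℝ :=
  ((2 : ℝ) ^ (2 ^ n - 1))⁻¹ *
    ∑ v ∈ Finset.univ.filter (fun v : Fin (2 ^ n) → ZMod 2 => ∀ j, j ≤ i → v j = u j),
      ∏ j, bsc D (y j) (polarEnc n v j)

/-- The posterior `P(u_i ∣ u₀^{i−1}, ȳ)`. -/
def post (D : ℝ) (n : ℕ) (y : Fin (2 ^ n) → ZMod 2) (i : Fin (2 ^ n))
    (u : Fin (2 ^ n) → ZMod 2) : ℝ :=
  Wi D n y i u /
    (Wi D n y i (Function.update u i 0) + Wi D n y i (Function.update u i 1))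

/-- The joint distribution `P(ū, ȳ) = 2^{−N} ∏_i P(u_i ∣ u₀^{i−1}, ȳ)`. -/
def Pfull (D : ℝ) (n : ℕ) (u y : Fin (2 ^ n) → ZMod 2) : ℝ :=
  ((2 : ℝ) ^ (2 ^ n))⁻¹ * ∏ i, post D n y i u

/-- The joint distribution `Q(ū, ȳ)` in which the frozen coordinates `i ∈ F` are replaced
by fair coin flips. -/
def Qfull (D : ℝ) (n : ℕ) (F : Finset (Fin (2 ^ n))) (u y : Fin (2 ^ n) → ZMod 2) : ℝ :=
  ((2 : ℝ) ^ (2 ^ n))⁻¹ * ∏ i, (if i ∈ F then (1 / 2 : ℝ) else post D n y i u)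

/-- `E_P[ |1/2 − P(0 ∣ U₀^{i−1}, Ȳ)| ]`: the expectation over `ȳ` (uniform) and over the
pasts `u₀^{i−1}` (weighted by `∏_{j<i} P(u_j ∣ u₀^{j−1}, ȳ)`); pasts are represented by the
words `u` whose coordinates `≥ i` vanish. -/
def frozenBias (D : ℝ) (n : ℕ) (i : Fin (2 ^ n)) : ℝ :=
  ∑ y : Fin (2 ^ n) → ZMod 2, ((2 : ℝ) ^ (2 ^ n))⁻¹ *
    ∑ u ∈ Finset.univ.filter (fun u : Fin (2 ^ n) → ZMod 2 => ∀ j, i ≤ j → u j = 0),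
      (∏ j ∈ Finset.univ.filter (fun j => j < i), post D n y j u) *
        |1 / 2 - post D n y i u|

section Aux

open Function

variable {D : ℝ} {n : ℕ}

lemma zmod2_eq_one {x : ZMod 2} (h : x ≠ 0) : x = 1 := by
  revert h; revert x; decide

lemma Wi_pos (hD0 : 0 < D) (hD1 : D < 1) (y : Fin (2 ^ n) → ZMod 2)
    (i : Fin (2 ^ n)) (u : Fin (2 ^ n) → ZMod 2) : 0 < Wi D n y i u := by
  unfold Wi
  apply mul_pos (by positivity)
  apply Finset.sum_pos
  · intro v _
    apply Finset.prod_pos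
    intro j _
    unfold bsc; split <;> linarith
  · exact ⟨u, by simp⟩

lemma Wi_congr {y : Fin (2 ^ n) → ZMod 2} {i : Fin (2 ^ n)}
    {u u' : Fin (2 ^ n) → ZMod 2} (h : ∀ j, j ≤ i → u j = u' j) :
    Wi D n y i u = Wi D n y i u' := by
  unfold Wi
  congr 2
  apply Finset.filter_congr
  intro v _
  constructor <;> intro hv j hj
  · rw [← h j hj]; exact hv j hj
  · rw [h j hj]; exact hv j hj

lemma update_agree {i : Fin (2 ^ n)} {u u' : Fin (2 ^ n) → ZMod 2}
    (h : ∀ j, j ≤ i → u j = u' j) (c : ZMod 2) :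
    ∀ j, j ≤ i → Function.update u i c j = Function.update u' i c j := by
  intro j hj
  rcases eq_or_ne j i with rfl | hne
  · simp
  · rw [Function.update_of_ne hne, Function.update_of_ne hne]; exact h j hj

lemma post_congr {y : Fin (2 ^ n) → ZMod 2} {i : Fin (2 ^ n)}
    {u u' : Fin (2 ^ n) → ZMod 2} (h : ∀ j, j ≤ i → u j = u' j) :
    post D n y i u = post D n y i u' := by
  unfold post
  rw [Wi_congr h, Wi_congr (update_agree h 0), Wi_congr (update_agree h 1)]

lemma post_nonneg (hD0 : 0 < D) (hD1 : D < 1) (y : Fin (2 ^ n) → ZMod 2)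
    (i : Fin (2 ^ n)) (u : Fin (2 ^ n) → ZMod 2) : 0 ≤ post D n y i u := by
  have ha := Wi_pos hD0 hD1 y i (Function.update u i 0)
  have hb := Wi_pos hD0 hD1 y i (Function.update u i 1)
  have hu := Wi_pos hD0 hD1 y i u
  unfold post
  exact div_nonneg hu.le (by linarith)

lemma post_add (hD0 : 0 < D) (hD1 : D < 1) (y : Fin (2 ^ n) → ZMod 2)
    (i : Fin (2 ^ n)) (u : Fin (2 ^ n) → ZMod 2) :
    post D n y i (Function.update u i 0) + post D n y i (Function.update u i 1) = 1 := by
  have ha := Wi_pos hD0 hD1 y i (Function.update u i 0)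
  have hb := Wi_pos hD0 hD1 y i (Function.update u i 1)
  unfold post
  rw [Function.update_idem, Function.update_idem, Function.update_idem, Function.update_idem]
  rw [← add_div, div_self (by linarith)]

lemma post_update_one (hD0 : 0 < D) (hD1 : D < 1) {y : Fin (2 ^ n) → ZMod 2}
    {i : Fin (2 ^ n)} {u : Fin (2 ^ n) → ZMod 2} (h : u i = 0) :
    post D n y i (Function.update u i 1) = 1 - post D n y i u := by
  have h2 := post_add hD0 hD1 y i u
  have h0 : Function.update u i 0 = u := by rw [← h, Function.update_eq_self]
  rw [h0] at h2; linarith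

lemma split_sum {N : ℕ} (m : Fin N) (Φ : (Fin N → ZMod 2) → ℝ) :
    ∑ u ∈ Finset.univ.filter
        (fun u : Fin N → ZMod 2 => ∀ j : Fin N, (m : ℕ) < (j : ℕ) → u j = 0), Φ u
      = ∑ u ∈ Finset.univ.filter
          (fun u : Fin N → ZMod 2 => ∀ j : Fin N, (m : ℕ) ≤ (j : ℕ) → u j = 0),
          (Φ u + Φ (Function.update u m 1)) := by
  classical
  rw [Finset.sum_add_distrib]
  rw [← Finset.sum_filter_add_sum_filter_not
      (Finset.univ.filter (fun u : Fin N → ZMod 2 => ∀ j : Fin N, (m : ℕ) < (j : ℕ) → u j = 0))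
      (fun u => u m = 0) Φ]
  have hset : (Finset.univ.filter
        (fun u : Fin N → ZMod 2 => ∀ j : Fin N, (m : ℕ) < (j : ℕ) → u j = 0)).filter
          (fun u => u m = 0)
      = Finset.univ.filter (fun u : Fin N → ZMod 2 => ∀ j : Fin N, (m : ℕ) ≤ (j : ℕ) → u j = 0) := by
    rw [Finset.filter_filter]
    apply Finset.filter_congr
    intro u _
    constructor
    · rintro ⟨h1, h2⟩ j hj
      rcases Nat.lt_or_ge (m : ℕ) (j : ℕ) with h | h
      · exact h1 j h
      · have hjm : j = m := Fin.ext (by omega)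
        rw [hjm]; exact h2
    · intro h
      exact ⟨fun j hj => h j hj.le, h m le_rfl⟩
  congr 1
  · rw [hset]
  · rw [← hset]
    apply Finset.sum_nbij' (i := fun u => Function.update u m 0)
      (j := fun u => Function.update u m 1)
    · intro a ha
      simp only [Finset.mem_filter, Finset.mem_univ, true_and] at ha ⊢
      refine ⟨fun j hj => ?_, by simp⟩
      have hne : j ≠ m := fun hc => by subst hc; omega
      rw [Function.update_of_ne hne]
      exact ha.1 j hj
    · intro b hb
      simp only [Finset.mem_filter, Finset.mem_univ, true_and] at hb ⊢
      refine ⟨fun j hj => ?_, by simp⟩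
      have hne : j ≠ m := fun hc => by subst hc; omega
      rw [Function.update_of_ne hne]
      exact hb.1 j hj
    · intro a ha
      simp only [Finset.mem_filter, Finset.mem_univ, true_and] at ha
      rw [Function.update_idem]
      have h1 : a m = 1 := zmod2_eq_one ha.2
      rw [← h1, Function.update_eq_self]
    · intro b hb
      simp only [Finset.mem_filter, Finset.mem_univ, true_and] at hb
      rw [Function.update_idem]
      have h0 : b m = 0 := hb.2
      rw [← h0, Function.update_eq_self]
    · intro a ha
      simp only [Finset.mem_filter, Finset.mem_univ, true_and] at ha
      rw [Function.update_idem]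
      have h1 : a m = 1 := zmod2_eq_one ha.2
      rw [← h1, Function.update_eq_self]

/-- The `Q`-conditional: fair coin on frozen coordinates. -/
def qf (D : ℝ) (n : ℕ) (F : Finset (Fin (2 ^ n))) (y : Fin (2 ^ n) → ZMod 2)
    (j : Fin (2 ^ n)) (u : Fin (2 ^ n) → ZMod 2) : ℝ :=
  if j ∈ F then 1 / 2 else post D n y j u

/-- Mixed conditional: `post` below `i`, `qf` from `i` on. -/
def mf (D : ℝ) (n : ℕ) (F : Finset (Fin (2 ^ n))) (y : Fin (2 ^ n) → ZMod 2)
    (i j : Fin (2 ^ n)) (u : Fin (2 ^ n) → ZMod 2) : ℝ :=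
  if (j : ℕ) < (i : ℕ) then post D n y j u else qf D n F y j u

lemma qf_nonneg (hD0 : 0 < D) (hD1 : D < 1) (F : Finset (Fin (2 ^ n)))
    (y : Fin (2 ^ n) → ZMod 2) (j : Fin (2 ^ n)) (u : Fin (2 ^ n) → ZMod 2) :
    0 ≤ qf D n F y j u := by
  unfold qf; split
  · norm_num
  · exact post_nonneg hD0 hD1 y j u

lemma mf_nonneg (hD0 : 0 < D) (hD1 : D < 1) (F : Finset (Fin (2 ^ n)))
    (y : Fin (2 ^ n) → ZMod 2) (i j : Fin (2 ^ n)) (u : Fin (2 ^ n) → ZMod 2) :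
    0 ≤ mf D n F y i j u := by
  unfold mf; split
  · exact post_nonneg hD0 hD1 y j u
  · exact qf_nonneg hD0 hD1 F y j u

lemma qf_congr {F : Finset (Fin (2 ^ n))} {y : Fin (2 ^ n) → ZMod 2} {j : Fin (2 ^ n)}
    {u u' : Fin (2 ^ n) → ZMod 2} (h : ∀ t, t ≤ j → u t = u' t) :
    qf D n F y j u = qf D n F y j u' := by
  unfold qf; split
  · rfl
  · exact post_congr h

lemma mf_congr {F : Finset (Fin (2 ^ n))} {y : Fin (2 ^ n) → ZMod 2} {i j : Fin (2 ^ n)}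
    {u u' : Fin (2 ^ n) → ZMod 2} (h : ∀ t, t ≤ j → u t = u' t) :
    mf D n F y i j u = mf D n F y i j u' := by
  unfold mf; split
  · exact post_congr h
  · exact qf_congr h

lemma update_high_agree {j mF : Fin (2 ^ n)} (hjm : (j : ℕ) < (mF : ℕ))
    (c : ZMod 2) (u : Fin (2 ^ n) → ZMod 2) :
    ∀ t, t ≤ j → Function.update u mF c t = u t := by
  intro t ht
  apply Function.update_of_ne
  have : (t : ℕ) ≤ (j : ℕ) := ht
  exact fun hc => by subst hc; omega

/-- Partial marginalization of the summand appearing in the main proof. -/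
def Tsum (D : ℝ) (n : ℕ) (F : Finset (Fin (2 ^ n))) (y : Fin (2 ^ n) → ZMod 2)
    (i : Fin (2 ^ n)) (m : ℕ) : ℝ :=
  ∑ u ∈ Finset.univ.filter
      (fun u : Fin (2 ^ n) → ZMod 2 => ∀ j : Fin (2 ^ n), m ≤ (j : ℕ) → u j = 0),
    (∏ j ∈ Finset.univ.filter (fun j : Fin (2 ^ n) => (j : ℕ) < m ∧ j ≠ i),
        mf D n F y i j u) * |1 / 2 - post D n y i u|

lemma Tsum_succ (hD0 : 0 < D) (hD1 : D < 1) (F : Finset (Fin (2 ^ n)))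
    (y : Fin (2 ^ n) → ZMod 2) (i : Fin (2 ^ n)) {m : ℕ}
    (him : (i : ℕ) < m) (hm : m < 2 ^ n) :
    Tsum D n F y i (m + 1) = Tsum D n F y i m := by
  classical
  set mF : Fin (2 ^ n) := ⟨m, hm⟩ with hmF
  have hval : (mF : ℕ) = m := rfl
  unfold Tsum
  have hfilt : Finset.univ.filter
        (fun u : Fin (2 ^ n) → ZMod 2 => ∀ j : Fin (2 ^ n), m + 1 ≤ (j : ℕ) → u j = 0)
      = Finset.univ.filter
        (fun u : Fin (2 ^ n) → ZMod 2 => ∀ j : Fin (2 ^ n), (mF : ℕ) < (j : ℕ) → u j = 0) := by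
    apply Finset.filter_congr
    intro u _
    rw [hval]
    constructor <;> intro h j hj <;> exact h j (by omega)
  rw [hfilt, split_sum mF]
  apply Finset.sum_congr
  · apply Finset.filter_congr
    intro u _
    rw [hval]
  intro u hu
  simp only [Finset.mem_filter, Finset.mem_univ, true_and] at hu
  have hum : u mF = 0 := hu mF (by rw [hval])
  have hidx : Finset.univ.filter (fun j : Fin (2 ^ n) => (j : ℕ) < m + 1 ∧ j ≠ i)
      = insert mF (Finset.univ.filter (fun j : Fin (2 ^ n) => (j : ℕ) < m ∧ j ≠ i)) := by
    ext j
    simp only [Finset.mem_filter, Finset.mem_insert, Finset.mem_univ, true_and]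
    constructor
    · rintro ⟨h1, h2⟩
      rcases Nat.lt_or_ge (j : ℕ) m with h | h
      · exact Or.inr ⟨h, h2⟩
      · exact Or.inl (Fin.ext (by rw [hval]; omega))
    · rintro (rfl | ⟨h1, h2⟩)
      · refine ⟨by rw [hval]; omega, fun hc => ?_⟩
        have : (mF : ℕ) = (i : ℕ) := congrArg Fin.val hc
        omega
      · exact ⟨by omega, h2⟩
  have hnotmem : mF ∉ Finset.univ.filter (fun j : Fin (2 ^ n) => (j : ℕ) < m ∧ j ≠ i) := by
    simp only [Finset.mem_filter, Finset.mem_univ, true_and, not_and]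
    intro hlt
    exact absurd hlt (lt_irrefl m)
  rw [hidx]
  simp only [Finset.prod_insert hnotmem]
  have hprod : ∏ j ∈ Finset.univ.filter (fun j : Fin (2 ^ n) => (j : ℕ) < m ∧ j ≠ i),
        mf D n F y i j (Function.update u mF 1)
      = ∏ j ∈ Finset.univ.filter (fun j : Fin (2 ^ n) => (j : ℕ) < m ∧ j ≠ i),
        mf D n F y i j u := by
    apply Finset.prod_congr rfl
    intro j hj
    simp only [Finset.mem_filter, Finset.mem_univ, true_and] at hj
    exact mf_congr (update_high_agree (by rw [hval]; exact hj.1) 1 u)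
  have habs : post D n y i (Function.update u mF 1) = post D n y i u :=
    post_congr (update_high_agree (by rw [hval]; exact him) 1 u)
  rw [hprod, habs]
  have hmfsum : mf D n F y i mF u + mf D n F y i mF (Function.update u mF 1) = 1 := by
    unfold mf
    rw [if_neg (by rw [hval]; omega), if_neg (by rw [hval]; omega)]
    unfold qf
    split
    · norm_num
    · rw [post_update_one hD0 hD1 hum]; ring
  linear_combination ((∏ j ∈ Finset.univ.filter (fun j : Fin (2 ^ n) => (j : ℕ) < m ∧ j ≠ i),
      mf D n F y i j u) * |1 / 2 - post D n y i u|) * hmfsum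

lemma Tsum_const (hD0 : 0 < D) (hD1 : D < 1) (F : Finset (Fin (2 ^ n)))
    (y : Fin (2 ^ n) → ZMod 2) (i : Fin (2 ^ n)) :
    ∀ m, (i : ℕ) + 1 ≤ m → m ≤ 2 ^ n → Tsum D n F y i m = Tsum D n F y i ((i : ℕ) + 1) := by
  intro m hm
  induction m, hm using Nat.le_induction with
  | base => intro _; rfl
  | succ m hm ih =>
    intro hle
    rw [Tsum_succ hD0 hD1 F y i (by omega) (by omega), ih (by omega)]

lemma Tsum_top (D : ℝ) (F : Finset (Fin (2 ^ n))) (y : Fin (2 ^ n) → ZMod 2)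
    (i : Fin (2 ^ n)) :
    Tsum D n F y i (2 ^ n)
      = ∑ u : Fin (2 ^ n) → ZMod 2,
          (∏ j ∈ Finset.univ.erase i, mf D n F y i j u) * |1 / 2 - post D n y i u| := by
  unfold Tsum
  have h1 : Finset.univ.filter
        (fun u : Fin (2 ^ n) → ZMod 2 => ∀ j : Fin (2 ^ n), 2 ^ n ≤ (j : ℕ) → u j = 0)
      = Finset.univ := by
    apply Finset.filter_true_of_mem
    intro u _ j hj
    exact absurd hj (not_le.mpr j.isLt)
  have h2 : Finset.univ.filter (fun j : Fin (2 ^ n) => (j : ℕ) < 2 ^ n ∧ j ≠ i)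
      = Finset.univ.erase i := by
    ext j
    simp only [Finset.mem_filter, Finset.mem_univ, true_and, Finset.mem_erase, and_true]
    rw [and_iff_right j.isLt]
  rw [h1, h2]

lemma Tsum_bot (hD0 : 0 < D) (hD1 : D < 1) (F : Finset (Fin (2 ^ n)))
    (y : Fin (2 ^ n) → ZMod 2) (i : Fin (2 ^ n)) :
    Tsum D n F y i ((i : ℕ) + 1)
      = 2 * ∑ u ∈ Finset.univ.filter
            (fun u : Fin (2 ^ n) → ZMod 2 => ∀ j : Fin (2 ^ n), i ≤ j → u j = 0),
          (∏ j ∈ Finset.univ.filter (fun j => j < i), post D n y j u)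
            * |1 / 2 - post D n y i u| := by
  classical
  unfold Tsum
  have hfilt : Finset.univ.filter
        (fun u : Fin (2 ^ n) → ZMod 2 => ∀ j : Fin (2 ^ n), (i : ℕ) + 1 ≤ (j : ℕ) → u j = 0)
      = Finset.univ.filter
        (fun u : Fin (2 ^ n) → ZMod 2 => ∀ j : Fin (2 ^ n), (i : ℕ) < (j : ℕ) → u j = 0) := by
    apply Finset.filter_congr
    intro u _
    constructor <;> intro h j hj <;> exact h j (by omega)
  rw [hfilt, split_sum i, Finset.mul_sum]
  have hsets : Finset.univ.filter
        (fun u : Fin (2 ^ n) → ZMod 2 => ∀ j : Fin (2 ^ n), (i : ℕ) ≤ (j : ℕ) → u j = 0)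
      = Finset.univ.filter
        (fun u : Fin (2 ^ n) → ZMod 2 => ∀ j : Fin (2 ^ n), i ≤ j → u j = 0) := by
    apply Finset.filter_congr
    intro u _
    constructor <;> intro h j hj <;> exact h j hj
  rw [hsets]
  apply Finset.sum_congr rfl
  intro u hu
  simp only [Finset.mem_filter, Finset.mem_univ, true_and] at hu
  have hui : u i = 0 := hu i le_rfl
  have hidx : Finset.univ.filter (fun j : Fin (2 ^ n) => (j : ℕ) < (i : ℕ) + 1 ∧ j ≠ i)
      = Finset.univ.filter (fun j : Fin (2 ^ n) => j < i) := by
    apply Finset.filter_congr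
    intro j _
    rw [Fin.lt_def]
    constructor
    · rintro ⟨h1, h2⟩
      have : (j : ℕ) ≠ (i : ℕ) := fun hc => h2 (Fin.ext hc)
      omega
    · intro h
      exact ⟨by omega, fun hc => by rw [hc] at h; omega⟩
  rw [hidx]
  have hmfp : ∀ v : Fin (2 ^ n) → ZMod 2,
      ∏ j ∈ Finset.univ.filter (fun j : Fin (2 ^ n) => j < i), mf D n F y i j v
        = ∏ j ∈ Finset.univ.filter (fun j : Fin (2 ^ n) => j < i), post D n y j v := by
    intro v
    apply Finset.prod_congr rfl
    intro j hj
    simp only [Finset.mem_filter, Finset.mem_univ, true_and] at hj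
    unfold mf
    rw [if_pos (show (j : ℕ) < (i : ℕ) from hj)]
  have hprod : ∏ j ∈ Finset.univ.filter (fun j : Fin (2 ^ n) => j < i),
        post D n y j (Function.update u i 1)
      = ∏ j ∈ Finset.univ.filter (fun j : Fin (2 ^ n) => j < i), post D n y j u := by
    apply Finset.prod_congr rfl
    intro j hj
    simp only [Finset.mem_filter, Finset.mem_univ, true_and] at hj
    exact post_congr (update_high_agree hj 1 u)
  have habs : |1 / 2 - post D n y i (Function.update u i 1)| = |1 / 2 - post D n y i u| := by
    rw [post_update_one hD0 hD1 hui]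
    rw [show (1 : ℝ) / 2 - (1 - post D n y i u) = post D n y i u - 1 / 2 by ring]
    exact abs_sub_comm _ _
  rw [hmfp, hmfp, hprod, habs]
  ring

/-- The hybrid product. -/
def Hk (D : ℝ) (n : ℕ) (F : Finset (Fin (2 ^ n))) (y u : Fin (2 ^ n) → ZMod 2)
    (k : ℕ) : ℝ :=
  ∏ j : Fin (2 ^ n), (if (j : ℕ) < k then post D n y j u else qf D n F y j u)

/-- Per-index contribution to the total variation bound. -/
def valk (D : ℝ) (n : ℕ) (F : Finset (Fin (2 ^ n))) (k : ℕ) : ℝ :=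
  ∑ y : Fin (2 ^ n) → ZMod 2, ((2 : ℝ) ^ (2 ^ n))⁻¹ *
    ∑ u : Fin (2 ^ n) → ZMod 2, |Hk D n F y u k - Hk D n F y u (k + 1)|

lemma Hk_sub (D : ℝ) (F : Finset (Fin (2 ^ n))) (y u : Fin (2 ^ n) → ZMod 2)
    (i : Fin (2 ^ n)) :
    Hk D n F y u (i : ℕ) - Hk D n F y u ((i : ℕ) + 1)
      = (qf D n F y i u - post D n y i u)
          * ∏ j ∈ Finset.univ.erase i, mf D n F y i j u := by
  unfold Hk
  rw [← Finset.mul_prod_erase Finset.univ _ (Finset.mem_univ i),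
      ← Finset.mul_prod_erase Finset.univ
        (fun j : Fin (2 ^ n) => if (j : ℕ) < (i : ℕ) + 1 then post D n y j u else qf D n F y j u)
        (Finset.mem_univ i)]
  rw [if_neg (lt_irrefl ((i : ℕ))), if_pos (Nat.lt_succ_self (i : ℕ))]
  have h1 : ∏ j ∈ Finset.univ.erase i,
        (if (j : ℕ) < (i : ℕ) + 1 then post D n y j u else qf D n F y j u)
      = ∏ j ∈ Finset.univ.erase i, mf D n F y i j u := by
    apply Finset.prod_congr rfl
    intro j hj
    have hji : j ≠ i := (Finset.mem_erase.mp hj).1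
    have : (j : ℕ) ≠ (i : ℕ) := fun hc => hji (Fin.ext hc)
    unfold mf
    rcases Nat.lt_or_ge (j : ℕ) (i : ℕ) with h | h
    · rw [if_pos (by omega), if_pos h]
    · rw [if_neg (by omega), if_neg (by omega)]
  have h2 : ∏ j ∈ Finset.univ.erase i,
        (if (j : ℕ) < (i : ℕ) then post D n y j u else qf D n F y j u)
      = ∏ j ∈ Finset.univ.erase i, mf D n F y i j u := by
    apply Finset.prod_congr rfl
    intro j hj
    rfl
  rw [h1, h2]
  ring

end Aux

/-- **Bound on the total variation distance** between `Q` and `P`. -/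
theorem total_variation_bound (D : ℝ) (hD0 : 0 < D) (hD1 : D < 1)
    (n : ℕ) (F : Finset (Fin (2 ^ n))) :
    ∑ u : Fin (2 ^ n) → ZMod 2, ∑ y : Fin (2 ^ n) → ZMod 2,
        |Qfull D n F u y - Pfull D n u y|
      ≤ 2 * ∑ i ∈ F, frozenBias D n i := by
  classical
  have key : ∀ y u : Fin (2 ^ n) → ZMod 2,
      |Qfull D n F u y - Pfull D n u y|
        ≤ ((2 : ℝ) ^ (2 ^ n))⁻¹ *
            ∑ k ∈ Finset.range (2 ^ n), |Hk D n F y u k - Hk D n F y u (k + 1)| := by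
    intro y u
    have h0 : Qfull D n F u y = ((2 : ℝ) ^ (2 ^ n))⁻¹ * Hk D n F y u 0 := by
      unfold Qfull Hk qf
      simp
    have hN : Pfull D n u y = ((2 : ℝ) ^ (2 ^ n))⁻¹ * Hk D n F y u (2 ^ n) := by
      unfold Pfull Hk
      congr 1
      exact Finset.prod_congr rfl fun j _ => (if_pos j.isLt).symm
    rw [h0, hN, ← mul_sub, abs_mul, abs_of_nonneg (by positivity)]
    apply mul_le_mul_of_nonneg_left _ (by positivity)
    rw [show Hk D n F y u 0 - Hk D n F y u (2 ^ n)
        = ∑ k ∈ Finset.range (2 ^ n), (Hk D n F y u k - Hk D n F y u (k + 1))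
      from (Finset.sum_range_sub' (Hk D n F y u) (2 ^ n)).symm]
    exact Finset.abs_sum_le_sum_abs _ _
  have hval : ∀ i : Fin (2 ^ n),
      valk D n F (i : ℕ) = if i ∈ F then 2 * frozenBias D n i else 0 := by
    intro i
    unfold valk
    by_cases hiF : i ∈ F
    · rw [if_pos hiF]
      have habs : ∀ y u : Fin (2 ^ n) → ZMod 2,
          |Hk D n F y u (i : ℕ) - Hk D n F y u ((i : ℕ) + 1)|
            = (∏ j ∈ Finset.univ.erase i, mf D n F y i j u)
                * |1 / 2 - post D n y i u| := by
        intro y u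
        rw [Hk_sub, abs_mul,
          abs_of_nonneg (Finset.prod_nonneg fun j _ => mf_nonneg hD0 hD1 F y i j u),
          mul_comm]
        congr 2
        unfold qf
        rw [if_pos hiF]
      unfold frozenBias
      rw [Finset.mul_sum]
      apply Finset.sum_congr rfl
      intro y _
      have h1 : ∑ u : Fin (2 ^ n) → ZMod 2,
            |Hk D n F y u (i : ℕ) - Hk D n F y u ((i : ℕ) + 1)|
          = Tsum D n F y i (2 ^ n) := by
        rw [Tsum_top]
        exact Finset.sum_congr rfl fun u _ => habs y u
      have h2 : Tsum D n F y i (2 ^ n)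
          = 2 * ∑ u ∈ Finset.univ.filter
                (fun u : Fin (2 ^ n) → ZMod 2 => ∀ j : Fin (2 ^ n), i ≤ j → u j = 0),
              (∏ j ∈ Finset.univ.filter (fun j => j < i), post D n y j u)
                * |1 / 2 - post D n y i u| := by
        rw [Tsum_const hD0 hD1 F y i (2 ^ n) (by have := i.isLt; omega) le_rfl,
          Tsum_bot hD0 hD1 F y i]
      rw [h1, h2]
      ring
    · rw [if_neg hiF]
      have hz : ∀ y u : Fin (2 ^ n) → ZMod 2,
          |Hk D n F y u (i : ℕ) - Hk D n F y u ((i : ℕ) + 1)| = 0 := by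
        intro y u
        rw [Hk_sub]
        have : qf D n F y i u = post D n y i u := by unfold qf; rw [if_neg hiF]
        rw [this]
        simp
      simp only [hz, Finset.sum_const_zero, mul_zero, Finset.sum_const_zero]
  calc ∑ u : Fin (2 ^ n) → ZMod 2, ∑ y : Fin (2 ^ n) → ZMod 2,
        |Qfull D n F u y - Pfull D n u y|
      ≤ ∑ u : Fin (2 ^ n) → ZMod 2, ∑ y : Fin (2 ^ n) → ZMod 2,
          ((2 : ℝ) ^ (2 ^ n))⁻¹ *
            ∑ k ∈ Finset.range (2 ^ n), |Hk D n F y u k - Hk D n F y u (k + 1)| :=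
        Finset.sum_le_sum fun u _ => Finset.sum_le_sum fun y _ => key y u
    _ = ∑ y : Fin (2 ^ n) → ZMod 2, ∑ u : Fin (2 ^ n) → ZMod 2,
          ∑ k ∈ Finset.range (2 ^ n),
            ((2 : ℝ) ^ (2 ^ n))⁻¹ * |Hk D n F y u k - Hk D n F y u (k + 1)| := by
        rw [Finset.sum_comm]
        exact Finset.sum_congr rfl fun y _ => Finset.sum_congr rfl fun u _ =>
          Finset.mul_sum _ _ _
    _ = ∑ k ∈ Finset.range (2 ^ n), ∑ y : Fin (2 ^ n) → ZMod 2,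
          ∑ u : Fin (2 ^ n) → ZMod 2,
            ((2 : ℝ) ^ (2 ^ n))⁻¹ * |Hk D n F y u k - Hk D n F y u (k + 1)| := by
        exact Eq.trans (Finset.sum_congr rfl fun y _ => Finset.sum_comm) Finset.sum_comm
    _ = ∑ k ∈ Finset.range (2 ^ n), valk D n F k := by
        unfold valk
        exact Finset.sum_congr rfl fun k _ => Finset.sum_congr rfl fun y _ =>
          (Finset.mul_sum _ _ _).symm
    _ = ∑ i : Fin (2 ^ n), valk D n F (i : ℕ) :=
        (Fin.sum_univ_eq_sum_range (valk D n F) (2 ^ n)).symm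
    _ = ∑ i : Fin (2 ^ n), (if i ∈ F then 2 * frozenBias D n i else 0) :=
        Finset.sum_congr rfl fun i _ => hval i
    _ = ∑ i ∈ F, 2 * frozenBias D n i := by
        rw [Finset.sum_ite_mem, Finset.univ_inter]
    _ = 2 * ∑ i ∈ F, frozenBias D n i := (Finset.mul_sum _ _ _).symm

end
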